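/- For every integer n ≥ 1, the number of Catalan words of length n avoiding the vincular pattern 1-22 equals the n-th Motzkin number M_n. -/

import Mathlib

/-- A Catalan word: a word of positive integers starting with 1 in which each
letter exceeds its predecessor by at most 1. -/
def IsCatalanWord {n : ℕ} (w : Fin n → ℕ) : Prop :=
  (∀ i, 1 ≤ w i) ∧ (∀ h : 0 < n, w ⟨0, h⟩ = 1) ∧
  ∀ i : ℕ, ∀ h : i + 1 < n, w ⟨i + 1, h⟩ ≤ w ⟨i, by omega⟩ + 1

/-- `w` contains the vincular pattern 1-22: there are indices `i < j` with
`w i < w j = w (j+1)`. -/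
def Contains1_22 {n : ℕ} (w : Fin n → ℕ) : Prop :=
  ∃ i j : ℕ, ∃ hj : j + 1 < n, ∃ hij : i < j,
    w ⟨i, by omega⟩ < w ⟨j, by omega⟩ ∧ w ⟨j, by omega⟩ = w ⟨j + 1, hj⟩

/-- The `n`-th Motzkin number: the number of sequences of `n` steps in
`{-1, 0, 1}` with all partial sums nonnegative and total sum zero. -/
noncomputable def motzkinNumber (n : ℕ) : ℕ :=
  Set.ncard {s : Fin n → ℤ | (∀ i, s i = -1 ∨ s i = 0 ∨ s i = 1) ∧
    (∀ j, 0 ≤ ∑ i ∈ Finset.Iic j, s i) ∧ (∑ i, s i = 0)}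



open List Finset

/-- Recursive Motzkin-number function. -/
def R : ℕ → ℕ
  | 0 => 1
  | (n+1) => R n + ∑ i : Fin n, R i * R (n - 1 - i)
decreasing_by all_goals (first | exact i.2.trans (Nat.lt_succ_self n) | omega)

lemma R_succ (n : ℕ) : R (n+1) = R n + ∑ i ∈ range n, R i * R (n - 1 - i) := by
  rw [R, Finset.sum_range]

/-- Lists of given length with entries in `S`. -/
def lists {α : Type*} [DecidableEq α] (S : Finset α) : ℕ → Finset (List α)
  | 0 => {[]}
  | (n+1) => S.biUnion fun a => (lists S n).image (a :: ·)

lemma mem_lists {α : Type*} [DecidableEq α] (S : Finset α) :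
    ∀ (n : ℕ) (l : List α), l ∈ lists S n ↔ l.length = n ∧ ∀ x ∈ l, x ∈ S := by
  intro n
  induction n with
  | zero =>
    intro l
    simp only [lists, Finset.mem_singleton, List.length_eq_zero_iff]
    constructor
    · rintro rfl; simp
    · rintro ⟨rfl, -⟩; rfl
  | succ n ih =>
    intro l
    simp only [lists, Finset.mem_biUnion, Finset.mem_image]
    constructor
    · rintro ⟨a, ha, t, ht, rfl⟩
      obtain ⟨h1, h2⟩ := (ih t).1 ht
      refine ⟨by simp [h1], ?_⟩
      intro x hx
      rcases List.mem_cons.1 hx with rfl | hx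
      · exact ha
      · exact h2 x hx
    · rintro ⟨h1, h2⟩
      cases l with
      | nil => simp at h1
      | cons a t =>
        exact ⟨a, h2 a (by simp), t, (ih t).2 ⟨by simpa using h1, fun x hx => h2 x (by simp [hx])⟩, rfl⟩

/-- Good (pattern-avoiding Catalan) word, as a list. Empty list allowed. -/
def GW (w : List ℕ) : Prop :=
  (w = [] ∨ w.head? = some 1) ∧
    w.Chain' (fun a b => 1 ≤ b ∧ b ≤ a + 1 ∧ (b = a → a = 1))

/-- Positive path: letters ≥ 2, starts with 2, steps up by at most one, no equal
adjacent letters. -/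
def GP (p : List ℕ) : Prop :=
  p.head? = some 2 ∧ p.Chain' (fun a b => 2 ≤ b ∧ b ≤ a + 1 ∧ b ≠ a)

/-- Motzkin word on steps. -/
def GM (l : List ℤ) : Prop :=
  (∀ x ∈ l, x = -1 ∨ x = 0 ∨ x = 1) ∧ (∀ i, 0 ≤ (l.take i).sum) ∧ l.sum = 0

open scoped Classical in
noncomputable def Wfin (n : ℕ) : Finset (List ℕ) :=
  (lists (Finset.range (n+2)) n).filter GW

open scoped Classical in
noncomputable def Pfin (n : ℕ) : Finset (List ℕ) :=
  (lists (Finset.range (n+2)) n).filter GP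

open scoped Classical in
noncomputable def Mfin (n : ℕ) : Finset (List ℤ) :=
  (lists ({-1, 0, 1} : Finset ℤ) n).filter GM

lemma chain_bound {t : List ℕ} {a : ℕ} (h : List.Chain (fun a b => b ≤ a + 1) a t) :
    ∀ x ∈ t, x ≤ a + t.length := by
  induction t generalizing a with
  | nil => simp
  | cons b t ih =>
    change List.IsChain _ (a :: b :: t) at h
    rw [List.isChain_cons_cons] at h
    intro x hx
    rcases List.mem_cons.1 hx with rfl | hx
    · simp only [List.length_cons]; omega
    · have := ih h.2 x hx
      simp only [List.length_cons]; omega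

lemma chain_lower {c : ℕ} {t : List ℕ} {a : ℕ} (h : List.Chain (fun _ b => c ≤ b) a t) :
    ∀ x ∈ t, c ≤ x := by
  induction t generalizing a with
  | nil => simp
  | cons b t ih =>
    change List.IsChain _ (a :: b :: t) at h
    rw [List.isChain_cons_cons] at h
    intro x hx
    rcases List.mem_cons.1 hx with rfl | hx
    · exact h.1
    · exact ih h.2 x hx

lemma GW_entries {w : List ℕ} (h : GW w) : ∀ x ∈ w, 1 ≤ x ∧ x ≤ w.length := by
  obtain ⟨h1, h2⟩ := h
  cases w with
  | nil => simp
  | cons a t =>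
    rcases h1 with h1 | h1
    · exact absurd h1 (by simp)
    simp only [head?_cons, Option.some.injEq] at h1
    subst h1
    have hc : List.Chain (fun a b => 1 ≤ b ∧ b ≤ a + 1 ∧ (b = a → a = 1)) 1 t := h2
    intro x hx
    rcases List.mem_cons.1 hx with rfl | hx
    · simp
    · constructor
      · exact chain_lower (List.IsChain.imp (fun a b hab => hab.1) hc) x hx
      · have := chain_bound (List.IsChain.imp (fun a b hab => hab.2.1) hc) x hx
        simp only [List.length_cons]; omega

lemma GP_entries {p : List ℕ} (h : GP p) : ∀ x ∈ p, 2 ≤ x ∧ x ≤ p.length + 1 := by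
  obtain ⟨h1, h2⟩ := h
  cases p with
  | nil => simp at h1
  | cons a t =>
    simp only [head?_cons, Option.some.injEq] at h1
    subst h1
    have hc : List.Chain (fun a b => 2 ≤ b ∧ b ≤ a + 1 ∧ b ≠ a) 2 t := h2
    intro x hx
    rcases List.mem_cons.1 hx with rfl | hx
    · simp
    · refine ⟨chain_lower (List.IsChain.imp (fun a b hab => hab.1) hc) x hx, ?_⟩
      have := chain_bound (List.IsChain.imp (fun a b hab => hab.2.1) hc) x hx
      simp only [List.length_cons]; omega

lemma mem_Wfin {n : ℕ} {w : List ℕ} : w ∈ Wfin n ↔ GW w ∧ w.length = n := by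
  classical
  simp only [Wfin, Finset.mem_filter, mem_lists, Finset.mem_range]
  constructor
  · rintro ⟨⟨h1, -⟩, h2⟩; exact ⟨h2, h1⟩
  · rintro ⟨hg, hl⟩
    exact ⟨⟨hl, fun x hx => by have := (GW_entries hg x hx).2; omega⟩, hg⟩

lemma mem_Pfin {n : ℕ} {p : List ℕ} : p ∈ Pfin n ↔ GP p ∧ p.length = n := by
  classical
  simp only [Pfin, Finset.mem_filter, mem_lists, Finset.mem_range]
  constructor
  · rintro ⟨⟨h1, -⟩, h2⟩; exact ⟨h2, h1⟩
  · rintro ⟨hg, hl⟩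
    exact ⟨⟨hl, fun x hx => by have := (GP_entries hg x hx).2; omega⟩, hg⟩

lemma mem_Mfin {n : ℕ} {l : List ℤ} : l ∈ Mfin n ↔ GM l ∧ l.length = n := by
  classical
  simp only [Mfin, Finset.mem_filter, mem_lists, Finset.mem_insert, Finset.mem_singleton]
  constructor
  · rintro ⟨⟨h1, -⟩, h2⟩; exact ⟨h2, h1⟩
  · rintro ⟨hg, hl⟩
    exact ⟨⟨hl, fun x hx => hg.1 x hx⟩, hg⟩

lemma GM_nil : GM [] := by simp [GM]

lemma GM_cons_zero {l : List ℤ} : GM ((0:ℤ) :: l) ↔ GM l := by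
  constructor
  · rintro ⟨h1, h2, h3⟩
    refine ⟨fun x hx => h1 x (by simp [hx]), fun i => ?_, by simpa using h3⟩
    have := h2 (i+1)
    simpa using this
  · rintro ⟨h1, h2, h3⟩
    refine ⟨?_, fun i => ?_, by simpa using h3⟩
    · intro x hx
      rcases List.mem_cons.1 hx with rfl | hx
      · simp
      · exact h1 x hx
    · cases i with
      | zero => simp
      | succ i => simpa using h2 i

lemma take_all' {α : Type*} {l : List α} {n : ℕ} (h : l.length ≤ n) : l.take n = l :=
  List.take_of_length_le h

lemma GM_updown {l₁ l₂ : List ℤ} (h₁ : GM l₁) (h₂ : GM l₂) :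
    GM ((1:ℤ) :: l₁ ++ (-1) :: l₂) := by
  obtain ⟨e1, s1, t1⟩ := h₁
  obtain ⟨e2, s2, t2⟩ := h₂
  refine ⟨?_, fun i => ?_, ?_⟩
  · intro x hx
    simp only [List.cons_append, List.mem_cons, List.mem_append] at hx
    rcases hx with rfl | hx | hx
    · tauto
    · exact e1 x hx
    · rcases hx with rfl | hx
      · tauto
      · exact e2 x hx
  · cases i with
    | zero => simp
    | succ j =>
      rw [List.cons_append, List.take_succ_cons, List.sum_cons,
        List.take_append, List.sum_append]
      rcases le_or_gt j l₁.length with hle | hlt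
      · have : l₁.length ≤ j ∨ j ≤ l₁.length := Or.inr hle
        rcases Nat.lt_or_ge j l₁.length with h' | h'
        · have : j - l₁.length = 0 := by omega
          rw [this]
          simp only [List.take_zero, List.sum_nil, add_zero]
          have := s1 j; omega
        · have hj : j = l₁.length := by omega
          subst hj
          rw [take_all' le_rfl, t1, Nat.sub_self]
          simp
      · rw [take_all' (by omega), t1]
        have hd : j - l₁.length = (j - l₁.length - 1) + 1 := by omega
        rw [hd, List.take_succ_cons, List.sum_cons]
        have := s2 (j - l₁.length - 1)
        omega
  · simp only [List.cons_append, List.sum_cons, List.sum_append, List.sum_cons, t1, t2]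
    ring

lemma GM_parse {x : ℤ} {t : List ℤ} (h : GM (x :: t)) :
    (x = 0 ∧ GM t) ∨ (x = 1 ∧ ∃ l₁ l₂, GM l₁ ∧ GM l₂ ∧ t = l₁ ++ (-1) :: l₂) := by
  obtain ⟨e, s, tot⟩ := h
  have hx : x = -1 ∨ x = 0 ∨ x = 1 := e x (by simp)
  have hx0 : 0 ≤ x := by have := s 1; simpa using this
  have hxcase : x = 0 ∨ x = 1 := by omega
  rcases hxcase with rfl | rfl
  · left
    refine ⟨rfl, fun y hy => e y (by simp [hy]), fun i => ?_, by simpa using tot⟩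
    have := s (i+1); simpa using this
  · right
    refine ⟨rfl, ?_⟩
    have htot : t.sum = -1 := by simp at tot; omega
    have hslb : ∀ m, -1 ≤ (t.take m).sum := by
      intro m
      have := s (m+1)
      simp only [List.take_succ_cons, List.sum_cons] at this
      omega
    have hex : ∃ j, (t.take j).sum = -1 := ⟨t.length, by rw [take_all' le_rfl]; exact htot⟩
    set j := Nat.find hex with hjdef
    have hj : (t.take j).sum = -1 := Nat.find_spec hex
    have hmin : ∀ m < j, (t.take m).sum ≠ -1 := fun m hm => Nat.find_min hex hm
    have hj1 : 1 ≤ j := by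
      rcases Nat.eq_zero_or_pos j with h0 | h; · exfalso; rw [h0] at hj; simp at hj
      exact h
    have hjlen : j ≤ t.length := Nat.find_le (by rw [take_all' le_rfl]; exact htot)
    set k := j - 1 with hkdef
    have hkj : k + 1 = j := by omega
    have hklen : k < t.length := by omega
    have hsk : 0 ≤ (t.take k).sum := by
      have h1 := hslb k
      have h2 := hmin k (by omega)
      omega
    have htk : (t.take (k+1)).sum = (t.take k).sum + t[k] := by
      have hts : t.take (k+1) = t.take k ++ [t[k]] := by
        rw [List.take_succ, List.getElem?_eq_getElem hklen]
        rfl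
      rw [hts, List.sum_append, List.sum_cons, List.sum_nil, add_zero]
    have hgk : t[k] = -1 ∧ (t.take k).sum = 0 := by
      have hmem : t[k] ∈ t := List.getElem_mem hklen
      have := e t[k] (by simp [hmem])
      rw [hkj, hj] at htk
      constructor <;> omega
    refine ⟨t.take k, t.drop j, ?_, ?_, ?_⟩
    · refine ⟨fun y hy => e y (by simp [List.mem_of_mem_take hy]), fun i => ?_, ?_⟩
      · rw [List.take_take]
        rcases le_or_gt i k with hik | hik
        · rw [min_eq_left hik]
          have h1 := hslb i
          have h2 := hmin i (by omega)
          omega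
        · rw [min_eq_right (by omega)]
          omega
      · exact hgk.2
    · refine ⟨fun y hy => e y (by simp [List.mem_of_mem_drop hy]), fun i => ?_, ?_⟩
      · have htake : t.take (j + i) = t.take j ++ (t.drop j).take i := List.take_add (l := t) (i := j) (j := i)
        have hs := hslb (j + i)
        rw [htake, List.sum_append, hj] at hs
        omega
      · have : t.sum = (t.take j).sum + (t.drop j).sum := by
          conv_lhs => rw [← List.take_append_drop j t]
          rw [List.sum_append]
        rw [htot, hj] at this
        omega
    · conv_lhs => rw [← List.take_append_drop k t]
      congr 1
      rw [List.drop_eq_getElem_cons hklen, hgk.1, hkj]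

lemma updown_len_aux {l₁ l₂ l₁' l₂' : List ℤ} (h₁ : l₁.sum = 0)
    (h₁' : ∀ i, 0 ≤ (l₁'.take i).sum)
    (he : l₁ ++ (-1:ℤ) :: l₂ = l₁' ++ (-1:ℤ) :: l₂') : ¬ l₁.length < l₁'.length := by
  intro hlen
  have h1 : (l₁ ++ (-1:ℤ) :: l₂).take (l₁.length + 1) = l₁ ++ [(-1:ℤ)] := by
    rw [List.take_append, take_all' (by omega), Nat.add_sub_cancel_left]
    simp
  have h2 : (l₁' ++ (-1:ℤ) :: l₂').take (l₁.length + 1) = l₁'.take (l₁.length + 1) := by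
    rw [List.take_append, Nat.sub_eq_zero_of_le (by omega)]
    simp
  rw [he, h2] at h1
  have := h₁' (l₁.length + 1)
  rw [h1] at this
  simp [h₁] at this

lemma updown_inj {l₁ l₂ l₁' l₂' : List ℤ} (h₁ : GM l₁) (h₁' : GM l₁')
    (he : l₁ ++ (-1:ℤ) :: l₂ = l₁' ++ (-1:ℤ) :: l₂') : l₁ = l₁' ∧ l₂ = l₂' := by
  have hl : l₁.length = l₁'.length := by
    have a := updown_len_aux h₁.2.2 h₁'.2.1 he
    have b := updown_len_aux h₁'.2.2 h₁.2.1 he.symm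
    omega
  have := List.append_inj he hl
  exact ⟨this.1, by simpa using this.2⟩

lemma Mfin_succ (n : ℕ) : Mfin (n+1) =
    (Mfin n).image (fun l => (0:ℤ) :: l) ∪
      (Finset.range n).biUnion (fun k => ((Mfin k) ×ˢ (Mfin (n-1-k))).image
        (fun pr => 1 :: pr.1 ++ (-1) :: pr.2)) := by
  ext l
  simp only [Finset.mem_union, Finset.mem_image, Finset.mem_biUnion, Finset.mem_range,
    Finset.mem_product, mem_Mfin]
  constructor
  · rintro ⟨hg, hlen⟩
    cases l with
    | nil => simp at hlen
    | cons x t =>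
      have hlt : t.length = n := by simpa using hlen
      rcases GM_parse hg with ⟨rfl, hgt⟩ | ⟨rfl, l₁, l₂, h₁, h₂, rfl⟩
      · exact Or.inl ⟨t, ⟨hgt, hlt⟩, rfl⟩
      · right
        have hlsum : l₁.length + 1 + l₂.length = n := by
          simp at hlt; omega
        have h2l : l₂.length = n - 1 - l₁.length := by omega
        exact ⟨l₁.length, by omega, ⟨l₁, l₂⟩, ⟨⟨h₁, rfl⟩, h₂, h2l⟩, by simp⟩
  · rintro (⟨t, ⟨hgt, hlt⟩, rfl⟩ | ⟨k, hk, ⟨l₁, l₂⟩, ⟨⟨h₁, hl₁⟩, h₂, hl₂⟩, rfl⟩)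
    · exact ⟨GM_cons_zero.2 hgt, by simp [hlt]⟩
    · refine ⟨GM_updown h₁ h₂, ?_⟩
      simp only [List.cons_append, List.length_cons, List.length_append, List.length_cons]
      dsimp only at hl₁ hl₂ ⊢
      omega

lemma Mfin_zero : Mfin 0 = {([] : List ℤ)} := by
  ext l
  simp only [mem_Mfin, Finset.mem_singleton, List.length_eq_zero_iff]
  constructor
  · rintro ⟨-, rfl⟩; rfl
  · rintro rfl; exact ⟨GM_nil, rfl⟩

lemma Mfin_card : ∀ n, (Mfin n).card = R n := by
  intro n
  induction n using Nat.strong_induction_on with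
  | _ n ih =>
    match n with
    | 0 => rw [Mfin_zero, Finset.card_singleton, R]
    | (n+1) =>
      rw [Mfin_succ, R_succ]
      rw [Finset.card_union_of_disjoint, Finset.card_image_of_injective _ (fun a b h => by
        simpa using h), Finset.card_biUnion, ih n (by omega)]
      · congr 1
        refine Finset.sum_congr rfl fun k hk => ?_
        rw [Finset.card_image_of_injOn, Finset.card_product, ih k (by simp at hk; omega),
          ih (n-1-k) (by omega)]
        rintro ⟨a, b⟩ hab ⟨a', b'⟩ hab' he
        simp only [Finset.mem_coe, Finset.mem_product, mem_Mfin] at hab hab'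
        simp only [List.cons_append, List.cons.injEq, true_and] at he
        have hlen : a.length = a'.length := by rw [hab.1.2, hab'.1.2]
        obtain ⟨h1, h2⟩ := List.append_inj he hlen
        simp only [List.cons.injEq, true_and] at h2
        exact Prod.ext h1 h2
      · -- pairwise disjoint across k
        intro k hk k' hk' hne
        rw [Function.onFun_apply, Finset.disjoint_left]
        rintro l hl hl'
        simp only [Finset.mem_image, Finset.mem_product, mem_Mfin] at hl hl'
        obtain ⟨⟨a, b⟩, ⟨⟨ha, hal⟩, hb, hbl⟩, rfl⟩ := hl
        obtain ⟨⟨a', b'⟩, ⟨⟨ha', hal'⟩, hb', hbl'⟩, he⟩ := hl'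
        simp only [List.cons_append, List.cons.injEq, true_and] at he
        obtain ⟨rfl, -⟩ := updown_inj ha' ha he
        exact hne (by rw [← hal, hal'])
      · -- disjoint: head 0 vs head 1
        rw [Finset.disjoint_left]
        rintro l hl hl'
        simp only [Finset.mem_image] at hl
        simp only [Finset.mem_biUnion, Finset.mem_image] at hl'
        obtain ⟨t, -, rfl⟩ := hl
        obtain ⟨k, -, pr, -, he⟩ := hl'
        simp at he

lemma List.Chain'.imp_mem {α : Type*} {R S : α → α → Prop} {l : List α} (h : List.Chain' R l)
    (H : ∀ a ∈ l, ∀ b ∈ l, R a b → S a b) : List.Chain' S l := by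
  simp only [List.Chain', List.isChain_iff_getElem] at h ⊢
  intro i hi
  exact H _ (List.getElem_mem _) _ (List.getElem_mem _) (h i hi)

lemma takeWhile_append_full {α : Type*} {pred : α → Bool} {p w : List α}
    (hp : ∀ x ∈ p, pred x = true) (hw : w.takeWhile pred = []) :
    (p ++ w).takeWhile pred = p := by
  rw [List.takeWhile_append, List.takeWhile_eq_self_iff.2 hp, if_pos rfl, hw, List.append_nil]

lemma GW_nil : GW [] := ⟨Or.inl rfl, List.isChain_nil⟩

lemma GW_cons1 {w : List ℕ} (h : GW w) : GW (1 :: w) := by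
  refine ⟨Or.inr rfl, List.isChain_cons.2 ⟨?_, h.2⟩⟩
  intro y hy
  rcases h.1 with rfl | h1
  · simp at hy
  · rw [h1] at hy
    simp only [Option.mem_def, Option.some.injEq] at hy
    subst hy
    exact ⟨le_rfl, by omega, fun _ => rfl⟩

lemma GP_ne_nil {p : List ℕ} (h : GP p) : p ≠ [] := by
  intro he; rw [he] at h; exact absurd h.1 (by simp)

lemma GW_consP {p w : List ℕ} (hp : GP p) (hw : GW w) : GW (1 :: (p ++ w)) := by
  refine ⟨Or.inr rfl, List.isChain_cons.2 ⟨?_, ?_⟩⟩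
  · intro y hy
    rw [List.head?_append_of_ne_nil _ (GP_ne_nil hp), hp.1] at hy
    simp only [Option.mem_def, Option.some.injEq] at hy
    subst hy
    exact ⟨by omega, by omega, by omega⟩
  · rw [List.isChain_append]
    refine ⟨hp.2.imp_mem fun a ha b hb hab => ⟨by omega, hab.2.1, fun he => absurd he hab.2.2⟩,
      hw.2, ?_⟩
    intro x hx y hy
    have hx2 : 2 ≤ x := (GP_entries hp x (List.mem_of_mem_getLast? hx)).1
    rcases hw.1 with rfl | h1
    · simp at hy
    · rw [h1] at hy
      simp only [Option.mem_def, Option.some.injEq] at hy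
      subst hy
      exact ⟨le_rfl, by omega, by omega⟩

lemma GP_single : GP [2] := ⟨rfl, List.isChain_singleton _⟩

lemma GP_up {p : List ℕ} (h : GP p) : GP (2 :: p.map (· + 1)) := by
  obtain ⟨p0, t, rfl⟩ : ∃ p0 t, p = p0 :: t := by
    cases p with
    | nil => exact absurd h.1 (by simp)
    | cons a t => exact ⟨a, t, rfl⟩
  have hp0 : p0 = 2 := by simpa using h.1
  subst hp0
  refine ⟨rfl, List.isChain_cons.2 ⟨?_, ?_⟩⟩
  · intro y hy
    simp only [List.map_cons, head?_cons, Option.mem_def, Option.some.injEq] at hy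
    subst hy
    exact ⟨by omega, by omega, by omega⟩
  · rw [List.isChain_map]
    exact h.2.imp fun {a b} hab => ⟨by omega, by omega, by omega⟩

lemma GP_updown {e p₂ : List ℕ} (he : GP e) (h₂ : GP p₂) :
    GP (2 :: (e.map (· + 1) ++ p₂)) := by
  have hmapne : e.map (· + 1) ≠ [] := by
    simpa using GP_ne_nil he
  refine ⟨rfl, List.isChain_cons.2 ⟨?_, ?_⟩⟩
  · intro y hy
    rw [List.head?_append_of_ne_nil _ hmapne, List.head?_map, he.1] at hy
    simp only [Option.mem_def, Option.map_some, Option.some.injEq] at hy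
    subst hy
    exact ⟨by omega, by omega, by omega⟩
  · rw [List.isChain_append]
    refine ⟨?_, h₂.2, ?_⟩
    · rw [List.isChain_map]
      exact he.2.imp fun {a b} hab => ⟨by omega, by omega, by omega⟩
    · intro x hx y hy
      rw [List.getLast?_map] at hx
      simp only [Option.mem_def, Option.map_eq_some_iff] at hx
      obtain ⟨z, hz, rfl⟩ := hx
      have hz2 : 2 ≤ z := (GP_entries he z (List.mem_of_mem_getLast? hz)).1
      rw [h₂.1] at hy
      simp only [Option.mem_def, Option.some.injEq] at hy
      subst hy
      exact ⟨le_rfl, by omega, by omega⟩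

lemma GW_parse {t : List ℕ} (h : GW (1 :: t)) :
    GW t ∨ ∃ p w, GP p ∧ GW w ∧ t = p ++ w := by
  have chainT : t.Chain' (fun a b => 1 ≤ b ∧ b ≤ a + 1 ∧ (b = a → a = 1)) :=
    (List.isChain_cons.1 h.2).2
  cases t with
  | nil => exact Or.inl GW_nil
  | cons b t' =>
    have hrel : 1 ≤ b ∧ b ≤ 1 + 1 ∧ (b = 1 → (1:ℕ) = 1) := by
      have := (List.isChain_cons.1 h.2).1
      exact this b (by simp)
    have hb : b = 1 ∨ b = 2 := by omega
    rcases hb with rfl | rfl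
    · exact Or.inl ⟨Or.inr rfl, chainT⟩
    · right
      set pred : ℕ → Bool := fun x => decide (2 ≤ x) with hpred
      refine ⟨(2 :: t').takeWhile pred, (2 :: t').dropWhile pred, ?_, ?_,
        (List.takeWhile_append_dropWhile (p := pred)).symm⟩
      · constructor
        · rw [List.takeWhile_cons, if_pos (by simp [hpred])]
          rfl
        · refine List.Chain'.imp_mem (chainT.prefix (List.takeWhile_prefix pred)) ?_
          intro a ha b hb hab
          have h2a : 2 ≤ a := by simpa [hpred] using List.mem_takeWhile_imp ha
          have h2b : 2 ≤ b := by simpa [hpred] using List.mem_takeWhile_imp hb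
          exact ⟨h2b, hab.2.1, by omega⟩
      · constructor
        · rcases he : (2 :: t').dropWhile pred with _ | ⟨y, w''⟩
          · exact Or.inl rfl
          · right
            have hy1 : ¬ (2 ≤ y) := by
              have := List.head?_dropWhile_not pred (2 :: t')
              rw [he] at this
              simpa [hpred] using this
            have hymem : y ∈ (2 :: t') := by
              have hsuf := List.dropWhile_suffix (l := 2 :: t') pred
              rw [he] at hsuf
              exact hsuf.mem (by simp)
            have hyge : 1 ≤ y := (GW_entries h y (by simp [hymem])).1
            have : y = 1 := by omega
            simp [this]
        · exact chainT.suffix (List.dropWhile_suffix pred)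

lemma GP_parse {t : List ℕ} (h : GP (2 :: t)) (hne : t ≠ []) :
    (∃ e, GP e ∧ t = e.map (· + 1)) ∨
      (∃ e p₂, GP e ∧ GP p₂ ∧ t = e.map (· + 1) ++ p₂) := by
  have chainT : t.Chain' (fun a b => 2 ≤ b ∧ b ≤ a + 1 ∧ b ≠ a) :=
    (List.isChain_cons.1 h.2).2
  have hent : ∀ x ∈ t, 2 ≤ x := fun x hx => (GP_entries h x (by simp [hx])).1
  cases t with
  | nil => exact absurd rfl hne
  | cons b t' =>
    have hrel : 2 ≤ b ∧ b ≤ 2 + 1 ∧ b ≠ 2 := by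
      have := (List.isChain_cons.1 h.2).1
      exact this b (by simp)
    have hb : b = 3 := by omega
    subst hb
    set pred : ℕ → Bool := fun x => decide (3 ≤ x) with hpred
    set e' := (3 :: t').takeWhile pred with he'
    set r := (3 :: t').dropWhile pred with hr
    have hsplit : e' ++ r = 3 :: t' := List.takeWhile_append_dropWhile (p := pred)
    have he'mem : ∀ x ∈ e', 3 ≤ x := fun x hx => by
      simpa [hpred] using List.mem_takeWhile_imp hx
    have he'head : e'.head? = some 3 := by
      rw [he', List.takeWhile_cons, if_pos (by simp [hpred])]
      rfl
    have hchain_e' : e'.Chain' (fun a b => 2 ≤ b ∧ b ≤ a + 1 ∧ b ≠ a) :=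
      chainT.prefix (List.takeWhile_prefix pred)
    have hmapback : e' = (e'.map (· - 1)).map (· + 1) := by
      have hmc : List.map ((· + 1) ∘ (· - 1)) e' = List.map id e' :=
        List.map_congr_left (fun a ha => by have := he'mem a ha; simp; omega)
      rw [List.map_map, hmc, List.map_id]
    have hGPe : GP (e'.map (· - 1)) := by
      constructor
      · rw [List.head?_map, he'head]
        rfl
      · simp only [List.Chain', List.isChain_map]
        refine hchain_e'.imp_mem ?_
        intro a ha b hb hab
        have h3a := he'mem a ha
        have h3b := he'mem b hb
        refine ⟨by omega, by omega, by omega⟩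
    rcases hrr : r with _ | ⟨y, r'⟩
    · left
      refine ⟨e'.map (· - 1), hGPe, ?_⟩
      rw [← hmapback]
      rw [hrr] at hsplit
      simpa using hsplit.symm
    · right
      have hy2 : y = 2 := by
        have h1 : ¬ (3 ≤ y) := by
          have := List.head?_dropWhile_not pred (3 :: t')
          rw [← hr, hrr] at this
          simpa [hpred] using this
        have hymem : y ∈ (3 :: t') := by
          have hsuf := List.dropWhile_suffix (l := 3 :: t') pred
          rw [← hr, hrr] at hsuf
          exact hsuf.mem (by simp)
        have := hent y hymem
        omega
      refine ⟨e'.map (· - 1), r, hGPe, ?_, ?_⟩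
      · constructor
        · rw [hrr, hy2]; rfl
        · exact chainT.suffix (List.dropWhile_suffix pred)
      · rw [← hmapback]
        exact hsplit.symm

lemma canonical_PW {p w : List ℕ} (hp : GP p) (hw : GW w) :
    (p ++ w).takeWhile (fun x => decide (2 ≤ x)) = p := by
  refine takeWhile_append_full (fun x hx => by
    simpa using (GP_entries hp x hx).1) ?_
  rcases hw.1 with rfl | h1
  · simp
  · cases w with
    | nil => simp
    | cons y w' =>
      have : y = 1 := by simpa using h1
      subst this
      rw [List.takeWhile_cons, if_neg (by simp)]

lemma canonical_P {e p₂ : List ℕ} (he : ∀ x ∈ e, 3 ≤ x) (h₂ : GP p₂) :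
    (e ++ p₂).takeWhile (fun x => decide (3 ≤ x)) = e := by
  refine takeWhile_append_full (fun x hx => by simpa using he x hx) ?_
  cases p₂ with
  | nil => simp
  | cons y p' =>
    have : y = 2 := by simpa using h₂.1
    subst this
    rw [List.takeWhile_cons, if_neg (by simp)]

lemma Wfin_zero : Wfin 0 = {([] : List ℕ)} := by
  ext w
  simp only [mem_Wfin, Finset.mem_singleton, List.length_eq_zero_iff]
  constructor
  · rintro ⟨-, rfl⟩; rfl
  · rintro rfl; exact ⟨GW_nil, rfl⟩

lemma Pfin_one : Pfin 1 = {([2] : List ℕ)} := by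
  ext p
  simp only [mem_Pfin, Finset.mem_singleton]
  constructor
  · rintro ⟨hg, hl⟩
    cases p with
    | nil => simp at hl
    | cons x t =>
      have hx : x = 2 := by simpa using hg.1
      have ht : t = [] := by simpa using hl
      rw [hx, ht]
  · rintro rfl; exact ⟨GP_single, rfl⟩

lemma Wfin_succ (n : ℕ) : Wfin (n+1) =
    (Wfin n).image (fun w => 1 :: w) ∪
      (Finset.range n).biUnion (fun m => ((Pfin (m+1)) ×ˢ (Wfin (n-1-m))).image
        (fun pr => 1 :: (pr.1 ++ pr.2))) := by
  ext w
  simp only [Finset.mem_union, Finset.mem_image, Finset.mem_biUnion, Finset.mem_range,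
    Finset.mem_product, mem_Wfin, mem_Pfin]
  constructor
  · rintro ⟨hg, hlen⟩
    cases w with
    | nil => simp at hlen
    | cons x t =>
      have hx : x = 1 := by
        rcases hg.1 with h | h
        · simp at h
        · simpa using h
      subst hx
      have hlt : t.length = n := by simpa using hlen
      rcases GW_parse hg with hgt | ⟨p, w', hp, hw', rfl⟩
      · exact Or.inl ⟨t, ⟨hgt, hlt⟩, rfl⟩
      · right
        have hpne : p ≠ [] := GP_ne_nil hp
        have hple : 1 ≤ p.length := List.length_pos_iff.2 hpne
        have hlen' : p.length + w'.length = n := by simpa using hlt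
        refine ⟨p.length - 1, by omega, ⟨p, w'⟩, ⟨⟨hp, by dsimp only; omega⟩, hw', by
          dsimp only; omega⟩, rfl⟩
  · rintro (⟨t, ⟨hgt, hlt⟩, rfl⟩ | ⟨m, hm, ⟨p, w'⟩, ⟨⟨hp, hlp⟩, hw', hlw'⟩, rfl⟩)
    · exact ⟨GW_cons1 hgt, by simp [hlt]⟩
    · refine ⟨GW_consP hp hw', ?_⟩
      simp only [List.length_cons, List.length_append]
      dsimp only at hlp hlw'
      omega

lemma Pfin_succ (n : ℕ) : Pfin (n+2) =
    (Pfin (n+1)).image (fun p => 2 :: p.map (· + 1)) ∪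
      (Finset.range n).biUnion (fun j => ((Pfin (j+1)) ×ˢ (Pfin (n-j))).image
        (fun pr => 2 :: (pr.1.map (· + 1) ++ pr.2))) := by
  ext p
  simp only [Finset.mem_union, Finset.mem_image, Finset.mem_biUnion, Finset.mem_range,
    Finset.mem_product, mem_Pfin]
  constructor
  · rintro ⟨hg, hlen⟩
    cases p with
    | nil => simp at hlen
    | cons x t =>
      have hx : x = 2 := by simpa using hg.1
      subst hx
      have hlt : t.length = n + 1 := by simpa using hlen
      have htne : t ≠ [] := by
        intro he; rw [he] at hlt; simp at hlt
      rcases GP_parse hg htne with ⟨e, he, rfl⟩ | ⟨e, p₂, he, h₂, rfl⟩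
      · exact Or.inl ⟨e, ⟨he, by simpa using hlt⟩, rfl⟩
      · right
        have hene : 1 ≤ e.length := List.length_pos_iff.2 (GP_ne_nil he)
        have hp₂ne : 1 ≤ p₂.length := List.length_pos_iff.2 (GP_ne_nil h₂)
        have hlen' : e.length + p₂.length = n + 1 := by simpa using hlt
        refine ⟨e.length - 1, by omega, ⟨e, p₂⟩, ⟨⟨he, by dsimp only; omega⟩, h₂, by
          dsimp only; omega⟩, rfl⟩
  · rintro (⟨e, ⟨he, hle⟩, rfl⟩ | ⟨j, hj, ⟨e, p₂⟩, ⟨⟨he, hle⟩, h₂, hl₂⟩, rfl⟩)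
    · exact ⟨GP_up he, by simp [hle]⟩
    · refine ⟨GP_updown he h₂, ?_⟩
      simp only [List.length_cons, List.length_append, List.length_map]
      dsimp only at hle hl₂
      omega

lemma Pfin_card : ∀ n, (Pfin (n+1)).card = R n := by
  intro n
  induction n using Nat.strong_induction_on with
  | _ n ih =>
    match n with
    | 0 => rw [Pfin_one, Finset.card_singleton, R]
    | (n+1) =>
      rw [Pfin_succ, R_succ]
      rw [Finset.card_union_of_disjoint, Finset.card_image_of_injective _ (fun a b h => by
          simp only [List.cons.injEq, true_and] at h
          exact List.map_injective_iff.2 (fun x y hxy => by omega) h), Finset.card_biUnion,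
        ih n (by omega)]
      · congr 1
        refine Finset.sum_congr rfl fun j hj => ?_
        have hjn : j < n := by simpa using hj
        rw [Finset.card_image_of_injOn, Finset.card_product, ih j (by omega)]
        · have : n - j = (n - 1 - j) + 1 := by omega
          rw [this, ih (n-1-j) (by omega)]
        · rintro ⟨a, b⟩ hab ⟨a', b'⟩ hab' he
          simp only [Finset.mem_coe, Finset.mem_product, mem_Pfin] at hab hab'
          simp only [List.cons.injEq, true_and] at he
          have hlen : (a.map (· + 1)).length = (a'.map (· + 1)).length := by
            simp [hab.1.2, hab'.1.2]
          obtain ⟨h1, h2⟩ := List.append_inj he hlen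
          have ha : a = a' := by
            have := List.map_injective_iff.2 (fun x y h => by omega) h1
            exact this
          exact Prod.ext ha h2
      · intro j hj j' hj' hne
        rw [Function.onFun_apply, Finset.disjoint_left]
        rintro l hl hl'
        simp only [Finset.mem_image, Finset.mem_product, mem_Pfin] at hl hl'
        obtain ⟨⟨a, b⟩, ⟨⟨ha, hal⟩, hb, hbl⟩, rfl⟩ := hl
        obtain ⟨⟨a', b'⟩, ⟨⟨ha', hal'⟩, hb', hbl'⟩, he⟩ := hl'
        simp only [List.cons.injEq, true_and] at he
        have hmem3 : ∀ x ∈ a.map (· + 1), 3 ≤ x := by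
          intro x hx
          simp only [List.mem_map] at hx
          obtain ⟨z, hz, rfl⟩ := hx
          have := (GP_entries ha z hz).1
          omega
        have hmem3' : ∀ x ∈ a'.map (· + 1), 3 ≤ x := by
          intro x hx
          simp only [List.mem_map] at hx
          obtain ⟨z, hz, rfl⟩ := hx
          have := (GP_entries ha' z hz).1
          omega
        have hc := canonical_P hmem3 hb
        have hc' := canonical_P hmem3' hb'
        dsimp only at hc hc' hal hal'
        rw [← he, hc'] at hc
        apply hne
        have : a'.length = a.length := by
          have := congrArg List.length hc
          simpa using this
        omega
      · rw [Finset.disjoint_left]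
        rintro l hl hl'
        simp only [Finset.mem_image, Finset.mem_biUnion, Finset.mem_product, mem_Pfin] at hl hl'
        obtain ⟨e, he, rfl⟩ := hl
        obtain ⟨j, -, ⟨a, b⟩, ⟨⟨ha, -⟩, hb, -⟩, heq⟩ := hl'
        simp only [List.cons.injEq, true_and] at heq
        have hbne : b ≠ [] := GP_ne_nil hb
        obtain ⟨y, b', rfl⟩ : ∃ y b', b = y :: b' := by
          cases b with
          | nil => exact absurd rfl hbne
          | cons y b' => exact ⟨y, b', rfl⟩
        have hy : y = 2 := by simpa using hb.1
        subst hy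
        have h2mem : (2:ℕ) ∈ e.map (· + 1) := by
          rw [← heq]
          simp
        simp only [List.mem_map] at h2mem
        obtain ⟨z, hz, hz2⟩ := h2mem
        have := (GP_entries he.1 z hz).1
        omega

lemma Wfin_card : ∀ n, (Wfin n).card = R n := by
  intro n
  induction n using Nat.strong_induction_on with
  | _ n ih =>
    match n with
    | 0 => rw [Wfin_zero, Finset.card_singleton, R]
    | (n+1) =>
      rw [Wfin_succ, R_succ]
      rw [Finset.card_union_of_disjoint, Finset.card_image_of_injective _ (fun a b h => by
          simpa using h), Finset.card_biUnion, ih n (by omega)]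
      · congr 1
        refine Finset.sum_congr rfl fun m hm => ?_
        have hmn : m < n := by simpa using hm
        rw [Finset.card_image_of_injOn, Finset.card_product, Pfin_card m, ih (n-1-m) (by omega)]
        rintro ⟨a, b⟩ hab ⟨a', b'⟩ hab' he
        simp only [Finset.mem_coe, Finset.mem_product, mem_Pfin, mem_Wfin] at hab hab'
        simp only [List.cons.injEq, true_and] at he
        have hlen : a.length = a'.length := by rw [hab.1.2, hab'.1.2]
        obtain ⟨h1, h2⟩ := List.append_inj he hlen
        exact Prod.ext h1 h2
      · intro m hm m' hm' hne
        rw [Function.onFun_apply, Finset.disjoint_left]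
        rintro l hl hl'
        simp only [Finset.mem_image, Finset.mem_product, mem_Pfin, mem_Wfin] at hl hl'
        obtain ⟨⟨a, b⟩, ⟨⟨ha, hal⟩, hb, hbl⟩, rfl⟩ := hl
        obtain ⟨⟨a', b'⟩, ⟨⟨ha', hal'⟩, hb', hbl'⟩, he⟩ := hl'
        simp only [List.cons.injEq, true_and] at he
        have hc := canonical_PW ha hb
        have hc' := canonical_PW ha' hb'
        dsimp only at hc hc' hal hal'
        rw [← he, hc'] at hc
        apply hne
        have : a.length = a'.length := by rw [hc]
        omega
      · rw [Finset.disjoint_left]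
        rintro l hl hl'
        simp only [Finset.mem_image, Finset.mem_biUnion, Finset.mem_product, mem_Pfin,
          mem_Wfin] at hl hl'
        obtain ⟨t, ht, rfl⟩ := hl
        obtain ⟨m, -, ⟨a, b⟩, ⟨⟨ha, -⟩, hb, -⟩, heq⟩ := hl'
        simp only [List.cons.injEq, true_and] at heq
        have hane : a ≠ [] := GP_ne_nil ha
        obtain ⟨y, a', rfl⟩ : ∃ y a', a = y :: a' := by
          cases a with
          | nil => exact absurd rfl hane
          | cons y a' => exact ⟨y, a', rfl⟩
        have hy : y = 2 := by simpa using ha.1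
        subst hy
        have hgt : GW t := ht.1
        rcases hgt.1 with rfl | h1
        · simp at heq
        · rw [← heq] at h1
          simp at h1

-- Motzkin transfer
lemma sum_Iic_eq_take {n : ℕ} (s : Fin n → ℤ) (j : Fin n) :
    ∑ i ∈ Finset.Iic j, s i = ((List.ofFn s).take ((j : ℕ) + 1)).sum := by
  rw [List.sum_take_ofFn]
  congr 1
  ext i
  simp only [Finset.mem_Iic, Finset.mem_filter, Finset.mem_univ, true_and, Fin.le_def]
  omega

lemma GM_ofFn_iff {n : ℕ} (s : Fin n → ℤ) :
    GM (List.ofFn s) ↔ ((∀ i, s i = -1 ∨ s i = 0 ∨ s i = 1) ∧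
      (∀ j, 0 ≤ ∑ i ∈ Finset.Iic j, s i) ∧ (∑ i, s i = 0)) := by
  constructor
  · rintro ⟨he, hs, ht⟩
    refine ⟨fun i => he (s i) (by rw [List.mem_ofFn]; exact ⟨i, rfl⟩), fun j => ?_, ?_⟩
    · rw [sum_Iic_eq_take]; exact hs _
    · rw [← List.sum_ofFn]; exact ht
  · rintro ⟨he, hs, ht⟩
    refine ⟨fun x hx => ?_, fun m => ?_, by rw [List.sum_ofFn]; exact ht⟩
    · rw [List.mem_ofFn] at hx
      obtain ⟨i, rfl⟩ := hx
      exact he i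
    · rw [List.sum_take_ofFn]
      rcases Nat.eq_zero_or_pos m with rfl | hm
      · simp
      rcases Nat.eq_zero_or_pos n with rfl | hn
      · simp
      have hj : min (m-1) (n-1) < n := by omega
      have : Finset.univ.filter (fun i : Fin n => (i : ℕ) < m) = Finset.Iic ⟨min (m-1) (n-1), hj⟩ := by
        ext i
        have := i.isLt
        simp only [Finset.mem_filter, Finset.mem_univ, true_and, Finset.mem_Iic, Fin.le_def]
        omega
      rw [this]
      exact hs _
  
lemma motzkin_eq_Mfin (n : ℕ) : motzkinNumber n = (Mfin n).card := by
  rw [motzkinNumber, ← Set.ncard_coe_finset (Mfin n)]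
  have himg : List.ofFn '' {s : Fin n → ℤ | (∀ i, s i = -1 ∨ s i = 0 ∨ s i = 1) ∧
      (∀ j, 0 ≤ ∑ i ∈ Finset.Iic j, s i) ∧ (∑ i, s i = 0)} = ↑(Mfin n) := by
    ext l
    simp only [Set.mem_image, Set.mem_setOf_eq, Finset.coe_sort_coe, Finset.mem_coe, mem_Mfin]
    constructor
    · rintro ⟨s, hs, rfl⟩
      exact ⟨(GM_ofFn_iff s).2 hs, List.length_ofFn (f := s)⟩
    · rintro ⟨hg, hl⟩
      subst hl
      exact ⟨fun i => l.get i, (GM_ofFn_iff _).1 (by rw [List.ofFn_get]; exact hg),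
        List.ofFn_get l⟩
  rw [← himg, Set.ncard_image_of_injective _ List.ofFn_injective]

lemma avoid_iff {n : ℕ} (w : Fin n → ℕ) (h1 : ∀ i, 1 ≤ w i)
    (h0 : ∀ h : 0 < n, w ⟨0, h⟩ = 1) :
    ¬ Contains1_22 w ↔
      ∀ (j : ℕ) (h : j + 1 < n), w ⟨j+1, h⟩ = w ⟨j, by omega⟩ → w ⟨j, by omega⟩ = 1 := by
  constructor
  · intro hnc j h heq
    by_contra hne
    have hj2 : 2 ≤ w ⟨j, by omega⟩ := by
      have := h1 ⟨j, by omega⟩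
      omega
    have hj0 : 0 < j := by
      rcases Nat.eq_zero_or_pos j with rfl | hj
      · exact absurd (h0 (by omega)) (by omega)
      · exact hj
    exact hnc ⟨0, j, h, hj0, by rw [h0 (by omega)]; omega, heq.symm⟩
  · rintro ha ⟨i, j, hj, hij, hlt, heq⟩
    have hj1 := ha j hj heq.symm
    have hi1 := h1 ⟨i, by omega⟩
    omega

lemma chain'_ofFn_iff {n : ℕ} {Rr : ℕ → ℕ → Prop} (w : Fin n → ℕ) :
    (List.ofFn w).Chain' Rr ↔
      ∀ (i : ℕ) (h : i + 1 < n), Rr (w ⟨i, by omega⟩) (w ⟨i+1, h⟩) := by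
  simp only [List.Chain', List.isChain_iff_getElem]
  constructor
  · intro hc i h
    have h' : i + 1 < (List.ofFn w).length := by simp; omega
    have := hc i h'
    simpa [List.get_ofFn, Fin.cast_mk] using this
  · intro hc i h
    have h'' : i < n - 1 := by simp at h; omega
    have h' : i + 1 < n := by omega
    have := hc i h'
    simpa [List.get_ofFn, Fin.cast_mk] using this

lemma GW_ofFn_iff {n : ℕ} (w : Fin n → ℕ) :
    GW (List.ofFn w) ↔ (IsCatalanWord w ∧ ¬ Contains1_22 w) := by
  constructor
  · rintro ⟨hh, hc⟩
    rw [chain'_ofFn_iff] at hc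
    have hw0 : ∀ h : 0 < n, w ⟨0, h⟩ = 1 := by
      intro h
      cases n with
      | zero => omega
      | succ m =>
        rcases hh with hh | hh
        · exact absurd hh (by simp)
        · rw [List.ofFn_succ] at hh
          simpa using hh
    have h1 : ∀ i, 1 ≤ w i := by
      rintro ⟨iv, hi⟩
      cases iv with
      | zero => rw [hw0 (by omega)]
      | succ k => exact (hc k hi).1
    refine ⟨⟨h1, hw0, fun i h => (hc i h).2.1⟩, ?_⟩
    rw [avoid_iff w h1 hw0]
    exact fun j h heq => (hc j h).2.2 heq
  · rintro ⟨⟨h1, hw0, hstep⟩, havoid⟩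
    rw [avoid_iff w h1 hw0] at havoid
    constructor
    · cases n with
      | zero => exact Or.inl (by simp)
      | succ m =>
        right
        rw [List.ofFn_succ]
        simpa using hw0 (by omega)
    · rw [chain'_ofFn_iff]
      exact fun i h => ⟨h1 _, hstep i h, havoid i h⟩

theorem catalan_avoid_1_22 (n : ℕ) (hn : 1 ≤ n) :
    Set.ncard {w : Fin n → ℕ | IsCatalanWord w ∧ ¬ Contains1_22 w} =
      motzkinNumber n := by
  rw [motzkin_eq_Mfin, Mfin_card, ← Wfin_card n, ← Set.ncard_coe_finset]
  have himg : List.ofFn '' {w : Fin n → ℕ | IsCatalanWord w ∧ ¬ Contains1_22 w} = ↑(Wfin n) := by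
    ext l
    simp only [Set.mem_image, Set.mem_setOf_eq, Finset.mem_coe, mem_Wfin]
    constructor
    · rintro ⟨s, hs, rfl⟩
      exact ⟨(GW_ofFn_iff s).2 hs, List.length_ofFn (f := s)⟩
    · rintro ⟨hg, hl⟩
      subst hl
      exact ⟨fun i => l.get i, (GW_ofFn_iff (fun i => l.get i)).1
        (by rw [List.ofFn_get]; exact hg), List.ofFn_get l⟩
  rw [← himg, Set.ncard_image_of_injective _ List.ofFn_injective]
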